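/- arXiv:2105.04410 — 7 statements merged into one kernel-verified Lean document; each statement's English description precedes it below -/
import Mathlib

section
/- Let K₀ > 0, ω₀ > 0 and 0 < f < f_cr, where f_cr = 2·arctan(1/K₀), and set Ω_f^+ = ω₀·√(1/(1 − K₀·tan(f/2))). Then Ω_f^+ > ω₀, b_f(Ω_f^+) = 1, b_f(ω) > 1 for all ω with ω₀ < ω < Ω_f^+, and −1 < b_f(ω) < 1 for all ω > Ω_f^+. -/
set_option maxHeartbeats 1000000


/-- **The upper instability-frequency boundary `Ω_f^+`.**
Let `K₀ > 0`, `ω₀ > 0` and `0 < f < f_cr = 2 arctan (1/K₀)`, and set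
`Ω_f^+ = ω₀ √(1/(1 - K₀ tan (f/2)))`.  Then `Ω_f^+ > ω₀`, `b_f(Ω_f^+) = 1`,
`b_f(ω) > 1` for `ω₀ < ω < Ω_f^+`, and `-1 < b_f(ω) < 1` for `ω > Ω_f^+`, where
`b_f(ω) = K₀ * (ω²/(ω² - ω₀²)) * sin f - cos f`. -/
theorem instability_upper_boundary
    (K₀ ω₀ : ℝ) (hK₀ : 0 < K₀) (hω₀ : 0 < ω₀)
    (f : ℝ) (hf : 0 < f) (hfcr : f < 2 * Real.arctan (1 / K₀))
    (b : ℝ → ℝ)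
    (hb : ∀ ω, b ω = K₀ * (ω ^ 2 / (ω ^ 2 - ω₀ ^ 2)) * Real.sin f - Real.cos f)
    (Ωp : ℝ) (hΩp : Ωp = ω₀ * Real.sqrt (1 / (1 - K₀ * Real.tan (f / 2)))) :
    ω₀ < Ωp ∧
    b Ωp = 1 ∧
    (∀ ω : ℝ, ω₀ < ω → ω < Ωp → b ω > 1) ∧
    (∀ ω : ℝ, Ωp < ω → -1 < b ω ∧ b ω < 1) := by
  set s := Real.sin (f / 2) with hs_def
  set c := Real.cos (f / 2) with hc_def
  have harc : Real.arctan (1 / K₀) < Real.pi / 2 := Real.arctan_lt_pi_div_two _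
  have hf2 : f / 2 < Real.pi / 2 := by linarith
  have hc : 0 < c := Real.cos_pos_of_mem_Ioo ⟨by linarith [Real.pi_pos], hf2⟩
  have hs : 0 < s := Real.sin_pos_of_pos_of_lt_pi (by linarith)
    (by linarith [Real.pi_pos])
  have htanlt : Real.tan (f / 2) < 1 / K₀ := by
    have := Real.tan_lt_tan_of_nonneg_of_lt_pi_div_two (le_of_lt (by linarith : (0:ℝ) < f / 2))
      harc (by linarith : f / 2 < Real.arctan (1 / K₀))
    rwa [Real.tan_arctan] at this
  have htan : Real.tan (f / 2) = s / c := Real.tan_eq_sin_div_cos _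
  have hKs : K₀ * s < c := by
    rw [htan, div_lt_div_iff₀ hc hK₀] at htanlt
    linarith
  have hD : 0 < c - K₀ * s := by linarith
  have pyth : s ^ 2 + c ^ 2 = 1 := Real.sin_sq_add_cos_sq _
  have hsin : Real.sin f = 2 * s * c := by
    have := Real.sin_two_mul (f / 2)
    rw [show 2 * (f / 2) = f by ring] at this
    linarith
  have hcos : Real.cos f = c ^ 2 - s ^ 2 := by
    have := Real.cos_two_mul (f / 2)
    rw [show 2 * (f / 2) = f by ring] at this
    rw [this]; nlinarith
  have hpos : 0 < 1 - K₀ * Real.tan (f / 2) := by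
    rw [htan]
    have : K₀ * (s / c) < 1 := by
      rw [mul_div_assoc' ] at *
      exact (div_lt_one hc).mpr (by linarith)
    linarith
  have hΩsq : Ωp ^ 2 = ω₀ ^ 2 * (c / (c - K₀ * s)) := by
    rw [hΩp, mul_pow, Real.sq_sqrt (by positivity)]
    rw [htan]
    field_simp
  have hΩeq : Ωp ^ 2 * (c - K₀ * s) = ω₀ ^ 2 * c := by
    rw [hΩsq]; field_simp
  have hΩnn : 0 ≤ Ωp := by rw [hΩp]; positivity
  have hΩpos2 : 0 < Ωp ^ 2 := by nlinarith [mul_pos (pow_pos hω₀ 2) hc]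
  have h1 : ω₀ < Ωp := by
    have h2 : ω₀ ^ 2 < Ωp ^ 2 := by
      nlinarith [mul_pos hΩpos2 (mul_pos hK₀ hs)]
    nlinarith
  -- key identities
  have keym : ∀ ω : ℝ, ω₀ < ω →
      b ω - 1 = 2 * c * ((c - K₀ * s) * (Ωp ^ 2 - ω ^ 2)) / (ω ^ 2 - ω₀ ^ 2) := by
    intro ω hω
    have hd : (0:ℝ) < ω ^ 2 - ω₀ ^ 2 :=
      sub_pos.mpr (pow_lt_pow_left₀ hω hω₀.le (by norm_num))
    have hd' := hd.ne'
    rw [hb, hsin, hcos]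
    field_simp
    linear_combination (-2 * c) * hΩeq + (ω ^ 2 - ω₀ ^ 2) * pyth
  have keyp : ∀ ω : ℝ, ω₀ < ω →
      b ω + 1 = 2 * s * (K₀ * c * ω ^ 2 + s * (ω ^ 2 - ω₀ ^ 2)) / (ω ^ 2 - ω₀ ^ 2) := by
    intro ω hω
    have hd : (0:ℝ) < ω ^ 2 - ω₀ ^ 2 :=
      sub_pos.mpr (pow_lt_pow_left₀ hω hω₀.le (by norm_num))
    have hd' := hd.ne'
    rw [hb, hsin, hcos]
    field_simp
    linear_combination (ω₀ ^ 2 - ω ^ 2) * pyth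
  refine ⟨h1, ?_, ?_, ?_⟩
  · have := keym Ωp h1
    rw [sub_self, mul_zero, mul_zero, zero_div] at this
    linarith
  · intro ω hω hωΩ
    have hd : (0:ℝ) < ω ^ 2 - ω₀ ^ 2 := by nlinarith
    have hlt : ω ^ 2 < Ωp ^ 2 := by nlinarith
    have := keym ω hω
    have hpos2 : 0 < 2 * c * ((c - K₀ * s) * (Ωp ^ 2 - ω ^ 2)) / (ω ^ 2 - ω₀ ^ 2) := by
      apply div_pos _ hd
      have : 0 < Ωp ^ 2 - ω ^ 2 := by linarith
      positivity
    linarith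
  · intro ω hω
    have hω₀ω : ω₀ < ω := lt_trans h1 hω
    have hd : (0:ℝ) < ω ^ 2 - ω₀ ^ 2 := by nlinarith
    have hgt : Ωp ^ 2 < ω ^ 2 := by nlinarith
    constructor
    · have := keyp ω hω₀ω
      have hpos2 : 0 < 2 * s * (K₀ * c * ω ^ 2 + s * (ω ^ 2 - ω₀ ^ 2)) / (ω ^ 2 - ω₀ ^ 2) := by
        apply div_pos _ hd
        have h3 : 0 < ω ^ 2 := pow_pos (hω₀.trans hω₀ω) 2
        nlinarith [mul_pos (mul_pos hK₀ hc) h3, mul_pos hs hd]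
      linarith
    · have := keym ω hω₀ω
      have hneg : 2 * c * ((c - K₀ * s) * (Ωp ^ 2 - ω ^ 2)) / (ω ^ 2 - ω₀ ^ 2) < 0 := by
        apply div_neg_of_neg_of_pos _ hd
        nlinarith [mul_pos hc (mul_pos hD (show (0:ℝ) < ω ^ 2 - Ωp ^ 2 by nlinarith))]
      linarith
end

section
/- Let K₀ > 0, ω₀ > 0 and 0 < f < π, and set Ω_f^− = ω₀·√(tan(f/2)/(tan(f/2) + K₀)). Then Ω_f^− < ω₀, b_f(Ω_f^−) = −1, −1 < b_f(ω) < 1 for all ω with 0 < ω < Ω_f^−, and b_f(ω) < −1 for all ω with Ω_f^− < ω < ω₀. -/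
/-- **The lower instability-frequency boundary `Ω_f^-`.**
Let `K₀ > 0`, `ω₀ > 0` and `0 < f < π`, and set
`Ω_f^- = ω₀ √(tan(f/2)/(tan(f/2) + K₀))`.  Then `Ω_f^- < ω₀`, `b_f(Ω_f^-) = -1`,
`-1 < b_f(ω) < 1` for `0 < ω < Ω_f^-`, and `b_f(ω) < -1` for `Ω_f^- < ω < ω₀`, where
`b_f(ω) = K₀ * (ω²/(ω² - ω₀²)) * sin f - cos f`. -/
theorem instability_lower_boundary
    (K₀ ω₀ : ℝ) (hK₀ : 0 < K₀) (hω₀ : 0 < ω₀)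
    (f : ℝ) (hf : 0 < f) (hfπ : f < Real.pi)
    (b : ℝ → ℝ)
    (hb : ∀ ω, b ω = K₀ * (ω ^ 2 / (ω ^ 2 - ω₀ ^ 2)) * Real.sin f - Real.cos f)
    (Ωm : ℝ) (hΩm : Ωm = ω₀ * Real.sqrt (Real.tan (f / 2) / (Real.tan (f / 2) + K₀))) :
    Ωm < ω₀ ∧
    b Ωm = -1 ∧
    (∀ ω : ℝ, 0 < ω → ω < Ωm → -1 < b ω ∧ b ω < 1) ∧
    (∀ ω : ℝ, Ωm < ω → ω < ω₀ → b ω < -1) := by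
  have hπ := Real.pi_pos
  set s := Real.sin (f / 2) with hs_def
  set c := Real.cos (f / 2) with hc_def
  set t := Real.tan (f / 2) with ht_def
  have hs : 0 < s := Real.sin_pos_of_pos_of_lt_pi (by linarith) (by linarith)
  have hc : 0 < c := Real.cos_pos_of_mem_Ioo ⟨by linarith, by linarith⟩
  have ht : t = s / c := Real.tan_eq_sin_div_cos _
  have htpos : 0 < t := ht ▸ div_pos hs hc
  have hst : s = t * c := by rw [ht]; field_simp
  have hpyth : s ^ 2 + c ^ 2 = 1 := Real.sin_sq_add_cos_sq _
  have hsinf : Real.sin f = 2 * s * c := by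
    rw [show f = 2 * (f / 2) by ring, Real.sin_two_mul]
  have hcosf : Real.cos f = 2 * c ^ 2 - 1 := by
    rw [show f = 2 * (f / 2) by ring, Real.cos_two_mul]
  have htK : 0 < t + K₀ := by linarith
  have hfrac : 0 < t / (t + K₀) := div_pos htpos htK
  have hΩpos : 0 < Ωm := by
    rw [hΩm]; exact mul_pos hω₀ (Real.sqrt_pos.mpr hfrac)
  have hΩsq : Ωm ^ 2 = ω₀ ^ 2 * (t / (t + K₀)) := by
    rw [hΩm, mul_pow, Real.sq_sqrt hfrac.le]
  have hΩsq' : Ωm ^ 2 * (t + K₀) = ω₀ ^ 2 * t := by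
    rw [hΩsq]; field_simp
  have hΩω : Ωm < ω₀ := by
    have h1 : Ωm ^ 2 < ω₀ ^ 2 := by
      rw [hΩsq]
      have h2 : t / (t + K₀) < 1 := by rw [div_lt_one htK]; linarith
      nlinarith [pow_pos hω₀ 2]
    nlinarith
  -- key formulas for 0 < ω < ω₀
  have key : ∀ ω : ℝ, 0 < ω → ω < ω₀ →
      b ω + 1 = 2 * s * c * ((ω ^ 2 * (K₀ + t) - t * ω₀ ^ 2) / (ω ^ 2 - ω₀ ^ 2)) ∧
      b ω < 1 := by
    intro ω hωpos hωlt
    have hden : ω ^ 2 - ω₀ ^ 2 < 0 := by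
      have := pow_lt_pow_left₀ hωlt hωpos.le (n := 2) two_ne_zero
      simpa using sub_neg.mpr this
    have hq : ω ^ 2 / (ω ^ 2 - ω₀ ^ 2) < 0 :=
      div_neg_of_pos_of_neg (by positivity) hden
    constructor
    · have e1 : b ω + 1 = 2 * s * (K₀ * (ω ^ 2 / (ω ^ 2 - ω₀ ^ 2)) * c + s) := by
        rw [hb, hsinf, hcosf]; linear_combination (-2 : ℝ) * hpyth
      have e2 : K₀ * (ω ^ 2 / (ω ^ 2 - ω₀ ^ 2)) * c + s
          = c * ((ω ^ 2 * (K₀ + t) - t * ω₀ ^ 2) / (ω ^ 2 - ω₀ ^ 2)) := by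
        rw [hst]; field_simp [hden.ne]; ring
      rw [e1, e2]; ring
    · have e3 : b ω - 1 = 2 * c * (K₀ * (ω ^ 2 / (ω ^ 2 - ω₀ ^ 2)) * s - c) := by
        rw [hb, hsinf, hcosf]; ring
      have hX : K₀ * (ω ^ 2 / (ω ^ 2 - ω₀ ^ 2)) * s < 0 :=
        mul_neg_of_neg_of_pos (mul_neg_of_pos_of_neg hK₀ hq) hs
      have : 2 * c * (K₀ * (ω ^ 2 / (ω ^ 2 - ω₀ ^ 2)) * s - c) < 0 :=
        mul_neg_of_pos_of_neg (by positivity) (by linarith)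
      linarith
  refine ⟨hΩω, ?_, ?_, ?_⟩
  · have h := (key Ωm hΩpos hΩω).1
    have hN : Ωm ^ 2 * (K₀ + t) - t * ω₀ ^ 2 = 0 := by linarith [hΩsq']
    rw [hN] at h
    simp at h
    linarith
  · intro ω hωpos hωΩ
    have h := key ω hωpos (lt_trans hωΩ hΩω)
    refine ⟨?_, h.2⟩
    have hω2 : ω ^ 2 < Ωm ^ 2 := by
      have := pow_lt_pow_left₀ hωΩ hωpos.le (n := 2) two_ne_zero
      simpa using this
    have hΩsq'' : Ωm ^ 2 * (K₀ + t) = t * ω₀ ^ 2 := by linear_combination hΩsq'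
    have h3 : ω ^ 2 * (K₀ + t) < Ωm ^ 2 * (K₀ + t) :=
      mul_lt_mul_of_pos_right hω2 (by linarith)
    have hden : ω ^ 2 - ω₀ ^ 2 < 0 := by
      have := pow_lt_pow_left₀ (lt_trans hωΩ hΩω) hωpos.le (n := 2) two_ne_zero
      simpa using sub_neg.mpr this
    have hN : ω ^ 2 * (K₀ + t) - t * ω₀ ^ 2 < 0 := by linarith
    have hpos : 0 < (ω ^ 2 * (K₀ + t) - t * ω₀ ^ 2) / (ω ^ 2 - ω₀ ^ 2) :=
      div_pos_of_neg_of_neg hN hden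
    have h2 : 0 < 2 * s * c * ((ω ^ 2 * (K₀ + t) - t * ω₀ ^ 2) / (ω ^ 2 - ω₀ ^ 2)) :=
      mul_pos (by positivity) hpos
    linarith [h.1]
  · intro ω hωΩ hωlt
    have h := (key ω (lt_trans hΩpos hωΩ) hωlt).1
    have hω2 : Ωm ^ 2 < ω ^ 2 := by
      have := pow_lt_pow_left₀ hωΩ hΩpos.le (n := 2) two_ne_zero
      simpa using this
    have hΩsq'' : Ωm ^ 2 * (K₀ + t) = t * ω₀ ^ 2 := by linear_combination hΩsq'
    have h3 : Ωm ^ 2 * (K₀ + t) < ω ^ 2 * (K₀ + t) :=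
      mul_lt_mul_of_pos_right hω2 (by linarith)
    have hden : ω ^ 2 - ω₀ ^ 2 < 0 := by
      have := pow_lt_pow_left₀ hωlt (lt_trans hΩpos hωΩ).le (n := 2) two_ne_zero
      simpa using sub_neg.mpr this
    have hN : 0 < ω ^ 2 * (K₀ + t) - t * ω₀ ^ 2 := by linarith
    have hneg : (ω ^ 2 * (K₀ + t) - t * ω₀ ^ 2) / (ω ^ 2 - ω₀ ^ 2) < 0 :=
      div_neg_of_pos_of_neg hN hden
    have h2 : 2 * s * c * ((ω ^ 2 * (K₀ + t) - t * ω₀ ^ 2) / (ω ^ 2 - ω₀ ^ 2)) < 0 :=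
      mul_neg_of_pos_of_neg (by positivity) hneg
    linarith
end

section
/- Let K₀ > 0, ω₀ > 0 and f_cr ≤ f < π, where f_cr = 2·arctan(1/K₀). Then for every ω > ω₀ one has b_f(ω) > K₀·sin f − cos f ≥ 1; in particular b_f(ω) > 1 for all ω > ω₀. -/
open Real

lemma sin_ge_sin_aux (t x : ℝ) (ht0 : 0 ≤ t) (ht : t ≤ Real.pi / 2)
    (h1 : t ≤ x) (h2 : x ≤ Real.pi - t) : Real.sin t ≤ Real.sin x := by
  have hpi := Real.pi_pos
  rcases le_or_gt x (Real.pi / 2) with hx | hx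
  · exact Real.strictMonoOn_sin.monotoneOn ⟨by linarith, by linarith⟩
      ⟨by linarith, hx⟩ h1
  · have : Real.sin x = Real.sin (Real.pi - x) := (Real.sin_pi_sub x).symm
    rw [this]
    exact Real.strictMonoOn_sin.monotoneOn ⟨by linarith, by linarith⟩
      ⟨by linarith, by linarith⟩ (by linarith)

/-- **Instability for all frequencies above resonance when `f ≥ f_cr`.**
Let `K₀ > 0`, `ω₀ > 0` and `f_cr ≤ f < π` where `f_cr = 2 arctan (1/K₀)`.  Then for
every `ω > ω₀` one has `b_f(ω) > K₀ sin f - cos f ≥ 1`, where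
`b_f(ω) = K₀ * (ω²/(ω² - ω₀²)) * sin f - cos f`; in particular `b_f(ω) > 1`. -/
theorem instability_above_critical_period
    (K₀ ω₀ : ℝ) (hK₀ : 0 < K₀) (hω₀ : 0 < ω₀)
    (f : ℝ) (hf : 2 * Real.arctan (1 / K₀) ≤ f) (hfπ : f < Real.pi) :
    ∀ ω : ℝ, ω₀ < ω →
      (K₀ * (ω ^ 2 / (ω ^ 2 - ω₀ ^ 2)) * Real.sin f - Real.cos f >
          K₀ * Real.sin f - Real.cos f) ∧
      K₀ * Real.sin f - Real.cos f ≥ 1 ∧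
      K₀ * (ω ^ 2 / (ω ^ 2 - ω₀ ^ 2)) * Real.sin f - Real.cos f > 1 := by
  intro ω hω
  set t := Real.arctan (1 / K₀) with htdef
  have ht0 : 0 < t := by
    rw [htdef, ← Real.arctan_zero]
    exact Real.arctan_strictMono (by positivity)
  have htlt : t < Real.pi / 2 := Real.arctan_lt_pi_div_two _
  have hf0 : 0 < f := by linarith
  have hsf : 0 < Real.sin f := Real.sin_pos_of_pos_of_lt_pi hf0 hfπ
  -- the middle inequality
  set R := Real.sqrt (1 + (1 / K₀) ^ 2) with hRdef
  have hR : 0 < R := Real.sqrt_pos.2 (by positivity)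
  have hsin_t : Real.sin t = (1 / K₀) / R := Real.sin_arctan _
  have hcos_t : Real.cos t = 1 / R := Real.cos_arctan _
  have hid : K₀ * Real.sin f - Real.cos f = K₀ * R * Real.sin (f - t) := by
    rw [Real.sin_sub, hsin_t, hcos_t]
    field_simp
  have hone : (1 : ℝ) = K₀ * R * Real.sin t := by
    rw [hsin_t]; field_simp
  have hsge : Real.sin t ≤ Real.sin (f - t) :=
    sin_ge_sin_aux t (f - t) ht0.le htlt.le (by linarith) (by linarith)
  have hmid : K₀ * Real.sin f - Real.cos f ≥ 1 := by
    rw [hid, hone]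
    have := mul_le_mul_of_nonneg_left hsge (by positivity : (0:ℝ) ≤ K₀ * R)
    linarith
  -- the first inequality
  have hω2 : ω ^ 2 - ω₀ ^ 2 > 0 := by nlinarith
  have hr1 : (1 : ℝ) < ω ^ 2 / (ω ^ 2 - ω₀ ^ 2) := by
    rw [lt_div_iff₀ hω2]; nlinarith
  have hfirst : K₀ * (ω ^ 2 / (ω ^ 2 - ω₀ ^ 2)) * Real.sin f - Real.cos f >
      K₀ * Real.sin f - Real.cos f := by
    have : K₀ * Real.sin f < K₀ * (ω ^ 2 / (ω ^ 2 - ω₀ ^ 2)) * Real.sin f := by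
      have h := mul_lt_mul_of_pos_left hr1 hK₀
      nlinarith
    linarith
  exact ⟨hfirst, hmid, by linarith⟩
end

section
/- Let K₀ > 0, ω₀ > 0 and 0 < f < π, and set Ω_f^− = ω₀·√(tan(f/2)/(tan(f/2) + K₀)) and, when 0 < f < f_cr = 2·arctan(1/K₀), Ω_f^+ = ω₀·√(1/(1 − K₀·tan(f/2))). Then for every ω > 0 with ω ≠ ω₀: if 0 < f < f_cr, |b_f(ω)| > 1 holds if and only if Ω_f^− < ω < Ω_f^+; and if f_cr ≤ f < π, |b_f(ω)| > 1 holds if and only if ω > Ω_f^−. -/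
set_option maxHeartbeats 1000000 in
/-- **Characterization of the instability frequencies.**
Let `K₀ > 0`, `ω₀ > 0`, `0 < f < π`, `f_cr = 2 arctan (1/K₀)`,
`Ω_f^- = ω₀ √(tan(f/2)/(tan(f/2) + K₀))` and, for `0 < f < f_cr`,
`Ω_f^+ = ω₀ √(1/(1 - K₀ tan(f/2)))`.  Then for every `ω > 0` with `ω ≠ ω₀`:
if `f < f_cr`, then `|b_f(ω)| > 1 ↔ Ω_f^- < ω < Ω_f^+`; and if `f_cr ≤ f`, then
`|b_f(ω)| > 1 ↔ ω > Ω_f^-`, where `b_f(ω) = K₀ (ω²/(ω² - ω₀²)) sin f - cos f`. -/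
theorem instability_frequency_characterization
    (K₀ ω₀ : ℝ) (hK₀ : 0 < K₀) (hω₀ : 0 < ω₀)
    (f : ℝ) (hf : 0 < f) (hfπ : f < Real.pi)
    (b : ℝ → ℝ)
    (hb : ∀ ω, b ω = K₀ * (ω ^ 2 / (ω ^ 2 - ω₀ ^ 2)) * Real.sin f - Real.cos f)
    (Ωm Ωp : ℝ)
    (hΩm : Ωm = ω₀ * Real.sqrt (Real.tan (f / 2) / (Real.tan (f / 2) + K₀)))
    (hΩp : Ωp = ω₀ * Real.sqrt (1 / (1 - K₀ * Real.tan (f / 2)))) :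
    ∀ ω : ℝ, 0 < ω → ω ≠ ω₀ →
      ((f < 2 * Real.arctan (1 / K₀) → (|b ω| > 1 ↔ Ωm < ω ∧ ω < Ωp)) ∧
       (2 * Real.arctan (1 / K₀) ≤ f → (|b ω| > 1 ↔ Ωm < ω))) := by
  have sqlt : ∀ a d : ℝ, 0 ≤ a → 0 ≤ d → (d < a ↔ d^2 < a^2) := by
    intro a d ha hd
    constructor
    · intro h; nlinarith
    · intro h; by_contra hcon; push_neg at hcon; nlinarith
  intro ω hω hωne
  have hπ := Real.pi_pos
  set s := Real.sin (f/2) with hs_def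
  set c := Real.cos (f/2) with hc_def
  have hs : 0 < s := Real.sin_pos_of_pos_of_lt_pi (by linarith) (by linarith)
  have hc : 0 < c := Real.cos_pos_of_mem_Ioo ⟨by linarith, by linarith⟩
  have hsc : s^2 + c^2 = 1 := Real.sin_sq_add_cos_sq _
  have ht : Real.tan (f/2) = s / c := Real.tan_eq_sin_div_cos _
  have hsinf : Real.sin f = 2 * s * c := by
    rw [show f = 2*(f/2) by ring, Real.sin_two_mul]
  have hcosf : Real.cos f = 1 - 2 * s^2 := by
    rw [show f = 2*(f/2) by ring, Real.cos_two_mul]; nlinarith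
  -- critical period condition
  have hfcr : f < 2 * Real.arctan (1/K₀) ↔ K₀ * s < c := by
    constructor
    · intro h
      have h1 : Real.arctan (Real.tan (f/2)) < Real.arctan (1/K₀) := by
        rw [Real.arctan_tan (by linarith) (by linarith)]; linarith
      have h2 : Real.tan (f/2) < 1/K₀ := Real.arctan_strictMono.lt_iff_lt.mp h1
      rw [ht, div_lt_div_iff₀ hc hK₀] at h2; linarith
    · intro h
      have h2 : Real.tan (f/2) < 1/K₀ := by
        rw [ht, div_lt_div_iff₀ hc hK₀]; linarith
      have := Real.arctan_strictMono h2
      rw [Real.arctan_tan (by linarith) (by linarith)] at this; linarith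
  -- denominator
  have hD : ω^2 - ω₀^2 ≠ 0 := by
    intro h
    have h2 : (ω - ω₀) * (ω + ω₀) = 0 := by linear_combination h
    rcases mul_eq_zero.mp h2 with h3 | h3
    · exact hωne (by linarith)
    · linarith
  -- key factorizations
  have e1 : (b ω - 1) * (ω^2 - ω₀^2) = 2*c*((K₀*s - c)*ω^2 + c*ω₀^2) := by
    rw [hb, hsinf, hcosf]; field_simp
    linear_combination (2*ω^2 - 2*ω₀^2) * hsc
  have e2 : (b ω + 1) * (ω^2 - ω₀^2) = 2*s*((K₀*c + s)*ω^2 - s*ω₀^2) := by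
    rw [hb, hsinf, hcosf]; field_simp
    ring
  -- Ωm characterization
  have hsK : 0 < s + K₀*c := by nlinarith
  have hscne : s/c + K₀ ≠ 0 := by positivity
  have hΩmsq : Ωm^2 = (s*ω₀^2)/(s+K₀*c) := by
    rw [hΩm, mul_pow, Real.sq_sqrt (by rw [ht]; positivity), ht]
    field_simp
  have hΩmnn : 0 ≤ Ωm := by rw [hΩm]; positivity
  have hΩmiff : Ωm < ω ↔ s*ω₀^2 < (K₀*c+s)*ω^2 := by
    rw [sqlt ω Ωm hω.le hΩmnn, hΩmsq, div_lt_iff₀ hsK]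
    constructor <;> intro h <;> nlinarith
  rw [hΩmiff]
  have habs : (|b ω| > 1) ↔ (1 < b ω ∨ 1 < -(b ω)) := lt_abs
  -- Ωp characterization (only meaningful when K₀ s < c)
  have hΩpiff : K₀ * s < c → (ω < Ωp ↔ 0 < (K₀*s - c)*ω^2 + c*ω₀^2) := by
    intro hKsc
    have hden : 0 < c - K₀*s := by linarith
    have h1 : (1 : ℝ) - K₀ * Real.tan (f/2) = (c - K₀*s)/c := by
      rw [ht]; field_simp
    have hΩpsq : Ωp^2 = (c*ω₀^2)/(c-K₀*s) := by
      rw [hΩp, mul_pow, Real.sq_sqrt (by rw [h1]; positivity), h1]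
      field_simp
    have hΩpnn : 0 ≤ Ωp := hΩp ▸ mul_nonneg hω₀.le (Real.sqrt_nonneg _)
    rw [sqlt Ωp ω hΩpnn hω.le, hΩpsq, lt_div_iff₀ hden]
    constructor <;> intro h <;> nlinarith
  rcases lt_or_gt_of_ne hD with hDneg | hDpos
  · -- ω < ω₀
    have hQ : 0 < (K₀*s - c)*ω^2 + c*ω₀^2 := by
      nlinarith [mul_pos hc (show (0:ℝ) < ω₀^2 - ω^2 by linarith), mul_pos (mul_pos hK₀ hs) (pow_pos hω 2)]
    have hblt : b ω < 1 := by nlinarith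
    have hiff : |b ω| > 1 ↔ s*ω₀^2 < (K₀*c+s)*ω^2 := by
      rw [habs]
      constructor
      · rintro (h | h)
        · linarith
        · nlinarith
      · intro h; right; nlinarith
    refine ⟨fun hcrit => ?_, fun _ => hiff⟩
    have hKsc : K₀ * s < c := hfcr.mp hcrit
    have hωΩp : ω < Ωp := (hΩpiff hKsc).mpr hQ
    rw [hiff]
    exact ⟨fun h => ⟨h, hωΩp⟩, fun h => h.1⟩
  · -- ω₀ < ω
    have hP : 0 < (K₀*c + s)*ω^2 - s*ω₀^2 := by
      nlinarith [mul_pos hs (show (0:ℝ) < ω^2 - ω₀^2 by linarith), mul_pos (mul_pos hK₀ hc) (pow_pos hω 2)]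
    have hbgt : -1 < b ω := by nlinarith
    have hmlt : s*ω₀^2 < (K₀*c+s)*ω^2 := by nlinarith
    have hiff : |b ω| > 1 ↔ 0 < (K₀*s - c)*ω^2 + c*ω₀^2 := by
      rw [habs]
      constructor
      · rintro (h | h)
        · nlinarith
        · linarith
      · intro h; left; nlinarith
    constructor
    · intro hcrit
      have hKsc : K₀ * s < c := hfcr.mp hcrit
      rw [hiff, hΩpiff hKsc]
      exact ⟨fun h => ⟨hmlt, h⟩, fun h => h.2⟩
    · intro hcrit
      rw [hiff]
      refine ⟨fun _ => hmlt, fun _ => ?_⟩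
      have hcrit2 : c ≤ K₀ * s := by
        by_contra hcon
        push_neg at hcon
        exact absurd hcrit (not_le.mpr (hfcr.mpr hcon))
      nlinarith [mul_nonneg (show (0:ℝ) ≤ K₀*s - c by linarith) (pow_pos hω 2).le, mul_pos hc (pow_pos hω₀ 2)]
end

section
/- Let ω, f, B be real with 0 < f < π, set sinc f = sin f/f and b_f = (B/2)·sinc f − cos f, and let T be the 2×2 complex monodromy matrix T = e^{iω}·[[cos f − iω·sinc f, sinc f], [ω²·sinc f + 2iω(cos f + b_f) − (2·b_f·cos f + cos² f + 1)/sinc f, iω·sinc f − cos f − 2·b_f]]. Then the characteristic polynomial of T is det(s·I − T) = s² + 2·b_f·e^{iω}·s + e^{2iω}; in particular, a complex number s is an eigenvalue (Floquet multiplier) of T if and only if s² + 2·b_f·e^{iω}·s + e^{2iω} = 0. -/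
open Complex

/-- **Characteristic polynomial of the MCK monodromy matrix.**
Let `0 < f < π`, `sinc f = sin f / f`, `b_f = (B/2) sinc f - cos f`, and let `T` be the
MCK monodromy matrix.  Then `det (s • I - T) = s² + 2 b_f e^{iω} s + e^{2iω}`; in
particular `s` is an eigenvalue (Floquet multiplier) of `T` iff
`s² + 2 b_f e^{iω} s + e^{2iω} = 0`. -/
theorem mck_monodromy_charpoly (ω f B : ℝ) (hf : 0 < f) (hfπ : f < Real.pi)
    (sincf bf : ℝ)
    (hsinc : sincf = Real.sin f / f)
    (hbf : bf = B / 2 * sincf - Real.cos f)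
    (T : Matrix (Fin 2) (Fin 2) ℂ)
    (hT : T = Complex.exp (Complex.I * ω) •
      !![(Real.cos f : ℂ) - Complex.I * ω * sincf,
         (sincf : ℂ);
         (ω : ℂ) ^ 2 * sincf + 2 * Complex.I * ω * ((Real.cos f : ℂ) + bf) -
           (2 * bf * Real.cos f + Real.cos f ^ 2 + 1) / (sincf : ℂ),
         Complex.I * ω * sincf - Real.cos f - 2 * bf]) :
    (∀ s : ℂ,
      Matrix.det (s • (1 : Matrix (Fin 2) (Fin 2) ℂ) - T) =
        s ^ 2 + 2 * (bf : ℂ) * Complex.exp (Complex.I * ω) * s +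
          Complex.exp (2 * Complex.I * ω)) ∧
    (∀ s : ℂ,
      (∃ v : Fin 2 → ℂ, v ≠ 0 ∧ T.mulVec v = s • v) ↔
        s ^ 2 + 2 * (bf : ℂ) * Complex.exp (Complex.I * ω) * s +
          Complex.exp (2 * Complex.I * ω) = 0) := by
  have hsin : Real.sin f ≠ 0 := ne_of_gt (Real.sin_pos_of_pos_of_lt_pi hf hfπ)
  have hs0 : (sincf : ℂ) ≠ 0 := by
    rw [hsinc]
    push_cast
    exact div_ne_zero (by exact_mod_cast hsin) (by exact_mod_cast hf.ne')
  have hexp2 : Complex.exp (2 * Complex.I * ω) = Complex.exp (Complex.I * ω) ^ 2 := by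
    rw [show (2 : ℂ) * Complex.I * ω = Complex.I * ω + Complex.I * ω by ring,
      Complex.exp_add, sq]
  have hdet : ∀ s : ℂ,
      Matrix.det (s • (1 : Matrix (Fin 2) (Fin 2) ℂ) - T) =
        s ^ 2 + 2 * (bf : ℂ) * Complex.exp (Complex.I * ω) * s +
          Complex.exp (2 * Complex.I * ω) := by
    intro s
    subst hT
    rw [hexp2]
    simp only [Matrix.det_fin_two, Matrix.sub_apply, Matrix.smul_apply, Matrix.one_apply,
      Matrix.cons_val', Matrix.cons_val_zero, Matrix.cons_val_one, Matrix.head_cons,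
      Matrix.head_fin_const, Matrix.empty_val', Matrix.cons_val_fin_one, smul_eq_mul,
      Fin.isValue, if_true, if_false, Ne, zero_ne_one, one_ne_zero, not_false_iff,
      mul_one, mul_zero]
    norm_num
    field_simp
    ring_nf
    rw [Complex.I_sq]
    ring
  refine ⟨hdet, fun s => ?_⟩
  rw [← hdet s]
  rw [← Matrix.exists_mulVec_eq_zero_iff]
  constructor
  · rintro ⟨v, hv, hTv⟩
    exact ⟨v, hv, by simp [Matrix.sub_mulVec, Matrix.smul_mulVec, hTv, Matrix.one_mulVec]⟩
  · rintro ⟨v, hv, hTv⟩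
    refine ⟨v, hv, ?_⟩
    have h : s • v - T.mulVec v = 0 := by
      rw [← hTv]
      simp [Matrix.sub_mulVec, Matrix.smul_mulVec, Matrix.one_mulVec]
    exact (sub_eq_zero.mp h).symm
end

section
/- Let ω be real and f > 0 real, and let C_B be the 2×2 complex matrix C_B = [[0, 1], [ω² − f², 2iω]]. Then for every complex z, the matrix exponential of z·C_B equals exp(z·C_B) = (e^{iωz}/f)·[[f·cos(fz) − iω·sin(fz), sin(fz)], [(ω² − f²)·sin(fz), f·cos(fz) + iω·sin(fz)]]. -/
open Complex

/-- **Matrix exponential of the e-beam companion matrix.**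
Let `ω` be real and `f > 0`, and let `C_B = [[0, 1], [ω² - f², 2iω]]`.  Then for every
complex `z`,
`exp (z • C_B) = (e^{iωz}/f) • [[f cos(fz) - iω sin(fz), sin(fz)],
                                [(ω² - f²) sin(fz), f cos(fz) + iω sin(fz)]]`. -/
theorem matrix_exp_companion (ω f : ℝ) (hf : 0 < f)
    (CB : Matrix (Fin 2) (Fin 2) ℂ)
    (hCB : CB = !![0, 1; (ω : ℂ) ^ 2 - (f : ℂ) ^ 2, 2 * Complex.I * ω]) :
    ∀ z : ℂ,
      NormedSpace.exp (z • CB) =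
        (Complex.exp (Complex.I * ω * z) / (f : ℂ)) •
          !![(f : ℂ) * Complex.cos (f * z) - Complex.I * ω * Complex.sin (f * z),
             Complex.sin (f * z);
             ((ω : ℂ) ^ 2 - (f : ℂ) ^ 2) * Complex.sin (f * z),
             (f : ℂ) * Complex.cos (f * z) + Complex.I * ω * Complex.sin (f * z)] := by
  intro z
  have hf' : (f : ℂ) ≠ 0 := by exact_mod_cast hf.ne'
  set P : Matrix (Fin 2) (Fin 2) ℂ := !![1, 1; I * (ω + f), I * (ω - f)] with hP
  set Q : Matrix (Fin 2) (Fin 2) ℂ :=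
    !![((f : ℂ) - ω) / (2 * f), -I / (2 * f); ((ω : ℂ) + f) / (2 * f), I / (2 * f)] with hQ
  have hPQ : P * Q = 1 := by
    ext i j
    fin_cases i <;> fin_cases j
    all_goals simp [hP, hQ, Matrix.mul_apply, Fin.sum_univ_two, Matrix.one_apply]
    all_goals try field_simp
    all_goals try ring_nf
    all_goals try simp only [Complex.I_sq]
    all_goals try ring
  have hQP : Q * P = 1 := by
    ext i j
    fin_cases i <;> fin_cases j
    all_goals simp [hP, hQ, Matrix.mul_apply, Fin.sum_univ_two, Matrix.one_apply]
    all_goals try field_simp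
    all_goals try ring_nf
    all_goals try simp only [Complex.I_sq]
    all_goals try ring
  set u : (Matrix (Fin 2) (Fin 2) ℂ)ˣ := ⟨P, Q, hPQ, hQP⟩ with hu
  set d : Fin 2 → ℂ := ![z * (I * (ω + f)), z * (I * (ω - f))] with hd
  have hkey : (z • CB) * P = P * Matrix.diagonal d := by
    ext i j
    fin_cases i <;> fin_cases j
    all_goals simp [hCB, hP, hd, Matrix.mul_apply, Fin.sum_univ_two, Matrix.diagonal]
    all_goals try ring_nf
    all_goals try simp only [Complex.I_sq]
    all_goals try ring
  have hconj : z • CB = (u : Matrix (Fin 2) (Fin 2) ℂ) * Matrix.diagonal d *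
      ((u⁻¹ : (Matrix (Fin 2) (Fin 2) ℂ)ˣ) : Matrix (Fin 2) (Fin 2) ℂ) := by
    show z • CB = P * Matrix.diagonal d * Q
    calc z • CB = (z • CB) * (P * Q) := by rw [hPQ, mul_one]
    _ = ((z • CB) * P) * Q := by rw [mul_assoc]
    _ = P * Matrix.diagonal d * Q := by rw [hkey]
  rw [hconj, Matrix.exp_units_conj, Matrix.exp_diagonal, Pi.exp_def]
  have hexpi : ∀ w : ℂ, NormedSpace.exp w = Complex.exp w := fun w => by
    rw [← Complex.exp_eq_exp_ℂ]
  have e0 : Complex.exp (z * (I * (ω + f))) =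
      Complex.exp (I * ω * z) * (Complex.cos (f * z) + Complex.sin (f * z) * I) := by
    rw [← Complex.exp_mul_I, ← Complex.exp_add]
    congr 1; ring
  have e1 : Complex.exp (z * (I * (ω - f))) =
      Complex.exp (I * ω * z) * (Complex.cos (f * z) - Complex.sin (f * z) * I) := by
    have h : Complex.cos (f * z) - Complex.sin (f * z) * I =
        Complex.cos (-(f * z)) + Complex.sin (-(f * z)) * I := by
      rw [Complex.cos_neg, Complex.sin_neg]; ring
    rw [h, ← Complex.exp_mul_I, ← Complex.exp_add]
    congr 1; ring
  set S : Matrix (Fin 2) (Fin 2) ℂ :=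
    (Complex.exp (Complex.I * ω * z) / (f : ℂ)) •
      !![(f : ℂ) * Complex.cos (f * z) - Complex.I * ω * Complex.sin (f * z),
         Complex.sin (f * z);
         ((ω : ℂ) ^ 2 - (f : ℂ) ^ 2) * Complex.sin (f * z),
         (f : ℂ) * Complex.cos (f * z) + Complex.I * ω * Complex.sin (f * z)] with hS
  have hfin : P * Matrix.diagonal (fun i => NormedSpace.exp (d i)) = S * P := by
    ext i j
    fin_cases i <;> fin_cases j
    all_goals simp [hP, hS, hd, Matrix.mul_apply, Fin.sum_univ_two, Matrix.diagonal,
      hexpi, e0, e1]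
    all_goals try field_simp
    all_goals try ring_nf
    all_goals try simp only [Complex.I_sq]
    all_goals try ring
  show P * Matrix.diagonal _ * Q = S
  calc P * Matrix.diagonal (fun i => NormedSpace.exp (d i)) * Q
      = (S * P) * Q := by rw [hfin]
    _ = S * (P * Q) := by rw [mul_assoc]
    _ = S := by rw [hPQ, mul_one]
end

section
/- Let ω be real, 0 < f < π, and let σ ∈ {+1, −1}. Define the 2×2 complex matrix T_σ = e^{iω}·[[cos f − iω·(sin f)/f, (sin f)/f], [((sin f)/f)·ω² + 2iω(cos f + σ) − f·(1 + σ·cos f)²/sin f, iω·(sin f)/f − cos f − 2σ]]. Then (T_σ + σ·e^{iω}·I)² = 0 while T_σ + σ·e^{iω}·I ≠ 0; consequently T_σ has the single degenerate eigenvalue −σ·e^{iω} of algebraic multiplicity 2 and geometric multiplicity 1, i.e. its Jordan canonical form is a single 2×2 Jordan block with eigenvalue −σ·e^{iω}. -/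
open Complex

lemma mck_key (ω F σ S C : ℂ) (hσ2 : σ^2 = 1)
    (hs : S ≠ 0) (hF : F ≠ 0) :
    (C + σ - Complex.I*ω*(S/F))^2
      + (S/F) * ((S/F)*ω^2 + 2*Complex.I*ω*(C+σ) - F*(1+σ*C)^2/S) = 0 := by
  have hI : Complex.I^2 = -1 := Complex.I_sq
  field_simp
  linear_combination (F^2 - F^2*C^2) * hσ2 + (ω^2*S^2) * hI

/-- **Exceptional point of degeneracy of the MCK monodromy matrix.**
Let `ω` be real, `0 < f < π`, `σ = ±1`, and let `T_σ` be the MCK monodromy matrix at an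
EPD.  Then `(T_σ + σ e^{iω} I)² = 0` while `T_σ + σ e^{iω} I ≠ 0`; consequently `T_σ`
has the single degenerate eigenvalue `-σ e^{iω}` of algebraic multiplicity `2`
(`det (s I - T_σ) = (s + σ e^{iω})²`) and geometric multiplicity `1`, i.e. its Jordan
canonical form is a single `2×2` Jordan block with eigenvalue `-σ e^{iω}`. -/
theorem mck_epd_jordan_block (ω f σ : ℝ) (hf : 0 < f) (hfπ : f < Real.pi)
    (hσ : σ = 1 ∨ σ = -1)
    (T : Matrix (Fin 2) (Fin 2) ℂ)
    (hT : T = Complex.exp (Complex.I * ω) •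
      !![(Real.cos f : ℂ) - Complex.I * ω * (Real.sin f / f),
         ((Real.sin f / f : ℝ) : ℂ);
         ((Real.sin f / f : ℝ) : ℂ) * (ω : ℂ) ^ 2 +
           2 * Complex.I * ω * ((Real.cos f : ℂ) + σ) -
           (f : ℂ) * ((1 : ℂ) + σ * Real.cos f) ^ 2 / (Real.sin f : ℂ),
         Complex.I * ω * (Real.sin f / f) - Real.cos f - 2 * σ]) :
    ((T + ((σ : ℂ) * Complex.exp (Complex.I * ω)) • (1 : Matrix (Fin 2) (Fin 2) ℂ)) ^ 2
        = 0) ∧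
    (T + ((σ : ℂ) * Complex.exp (Complex.I * ω)) • (1 : Matrix (Fin 2) (Fin 2) ℂ) ≠ 0) ∧
    (∀ s : ℂ,
      Matrix.det (s • (1 : Matrix (Fin 2) (Fin 2) ℂ) - T) =
        (s + (σ : ℂ) * Complex.exp (Complex.I * ω)) ^ 2) ∧
    (∀ s : ℂ,
      (∃ v : Fin 2 → ℂ, v ≠ 0 ∧ T.mulVec v = s • v) ↔
        s = -((σ : ℂ) * Complex.exp (Complex.I * ω))) ∧
    Module.finrank ℂ
        (LinearMap.ker
          (Matrix.mulVecLin
            (T + ((σ : ℂ) * Complex.exp (Complex.I * ω)) •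
              (1 : Matrix (Fin 2) (Fin 2) ℂ)))) = 1 := by
  have hσ2 : (σ:ℂ)^2 = 1 := by rcases hσ with h|h <;> subst h <;> norm_num
  have hsinR : Real.sin f ≠ 0 := ne_of_gt (Real.sin_pos_of_pos_of_lt_pi hf hfπ)
  have hs : Complex.sin f ≠ 0 := by
    rw [← Complex.ofReal_sin]; exact_mod_cast hsinR
  have hF : (f:ℂ) ≠ 0 := by exact_mod_cast hf.ne'
  set E := Complex.exp (Complex.I * ω) with hEdef
  have hE : E ≠ 0 := Complex.exp_ne_zero _
  obtain ⟨a, b, c, key, hb, hN⟩ :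
      ∃ a b c : ℂ, a^2 + b*c = 0 ∧ b ≠ 0 ∧
        T + ((σ:ℂ)*E) • (1 : Matrix (Fin 2) (Fin 2) ℂ) = E • !![a, b; c, -a] := by
    refine ⟨Complex.cos f + σ - Complex.I*ω*(Complex.sin f/f), Complex.sin f/f,
      (Complex.sin f/f)*ω^2 + 2*Complex.I*ω*(Complex.cos f+σ)
        - f*(1+σ*Complex.cos f)^2/Complex.sin f,
      mck_key ω f σ (Complex.sin f) (Complex.cos f) hσ2 hs hF,
      div_ne_zero hs hF, ?_⟩
    subst hT
    ext i j
    fin_cases i <;> fin_cases j <;>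
      simp [Matrix.one_apply] <;> push_cast <;> ring
  clear hT
  have hTeq : T = E • !![a, b; c, -a] - ((σ:ℂ)*E) • 1 := eq_sub_of_add_eq hN
  have hM : !![a, b; c, -a] * !![a, b; c, -a] = 0 := by
    ext i j
    fin_cases i <;> fin_cases j <;>
      simp [Matrix.mul_apply, Fin.sum_univ_two] <;>
      (try ring) <;> (try linear_combination key) <;> (try linear_combination -key)
  have hM2 : !![a, b; c, -a] ^ 2 = 0 := by rw [pow_two, hM]
  have hsq : (T + ((σ:ℂ)*E) • (1 : Matrix (Fin 2) (Fin 2) ℂ)) ^ 2 = 0 := by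
    rw [hN, smul_pow, hM2, smul_zero]
  have hne : T + ((σ:ℂ)*E) • (1 : Matrix (Fin 2) (Fin 2) ℂ) ≠ 0 := by
    intro h
    rw [hN] at h
    have h01 := congrFun (congrFun h 0) 1
    simp at h01
    exact h01.elim hE hb
  have hchar : ∀ s : ℂ,
      Matrix.det (s • (1 : Matrix (Fin 2) (Fin 2) ℂ) - T) = (s + (σ:ℂ)*E) ^ 2 := by
    intro s
    rw [hTeq, Matrix.det_fin_two]
    simp [Matrix.one_apply]
    linear_combination (-(E^2)) * key
  refine ⟨hsq, hne, hchar, fun s => ?_, ?_⟩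
  · constructor
    · rintro ⟨v, hv, hveq⟩
      have h0 : (s • (1 : Matrix (Fin 2) (Fin 2) ℂ) - T).mulVec v = 0 := by
        rw [Matrix.sub_mulVec, Matrix.smul_mulVec, Matrix.one_mulVec, hveq,
          sub_self]
      have hdet : Matrix.det (s • (1 : Matrix (Fin 2) (Fin 2) ℂ) - T) = 0 :=
        Matrix.exists_mulVec_eq_zero_iff.mp ⟨v, hv, h0⟩
      rw [hchar s] at hdet
      have h2 := pow_eq_zero_iff (n := 2) (by norm_num) |>.mp hdet
      linear_combination h2
    · intro h
      subst h
      have hdet : Matrix.det ((-((σ:ℂ)*E)) • (1 : Matrix (Fin 2) (Fin 2) ℂ) - T) = 0 := by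
        rw [hchar]; ring
      obtain ⟨v, hv, h0⟩ := Matrix.exists_mulVec_eq_zero_iff.mpr hdet
      refine ⟨v, hv, ?_⟩
      rw [Matrix.sub_mulVec, Matrix.smul_mulVec, Matrix.one_mulVec,
        sub_eq_zero] at h0
      exact h0.symm
  · set N := T + ((σ:ℂ)*E) • (1 : Matrix (Fin 2) (Fin 2) ℂ) with hNdef
    have hv0 : N.mulVec ![b, -a] = 0 := by
      rw [hN]
      ext i
      fin_cases i <;>
        simp [Matrix.mulVec, dotProduct, Fin.sum_univ_two] <;>
        (try ring) <;> (try linear_combination E * key) <;> (try linear_combination (-E) * key)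
    have hv0ne : (![b, -a] : Fin 2 → ℂ) ≠ 0 := by
      intro h
      exact hb (congrFun h 0)
    have hmem : (![b, -a] : Fin 2 → ℂ) ∈ LinearMap.ker N.mulVecLin := by
      rw [LinearMap.mem_ker, Matrix.mulVecLin_apply]; exact hv0
    have hnotmem : (![0, 1] : Fin 2 → ℂ) ∉ LinearMap.ker N.mulVecLin := by
      rw [LinearMap.mem_ker, Matrix.mulVecLin_apply]
      intro h
      have h0 := congrFun h 0
      rw [hN] at h0
      simp [Matrix.mulVec, dotProduct, Fin.sum_univ_two] at h0
      exact h0.elim hE hb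
    have hnetop : LinearMap.ker N.mulVecLin ≠ ⊤ := by
      intro h
      exact hnotmem (h ▸ Submodule.mem_top)
    have hlt : Module.finrank ℂ (LinearMap.ker N.mulVecLin) < 2 := by
      have := Submodule.finrank_lt (K := ℂ) (V := Fin 2 → ℂ) hnetop
      simpa using this
    have hpos : 0 < Module.finrank ℂ (LinearMap.ker N.mulVecLin) := by
      rw [Module.finrank_pos_iff]
      exact ⟨⟨_, hmem⟩, 0, by simpa [Submodule.mk_eq_zero] using hv0ne⟩
    omega
end
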